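/- For every fixed even integer k ≥ 2 and every n ∈ ℕ, there exists a graph G with tree-independence number 1 (hence layered tree-independence number at most 1) such that the layered tree-independence number of the k-th power G^k is at least n. -/

import Mathlib

open Classical

/-- A tree decomposition of a graph `G`. -/
structure TreeDecomp {V : Type*} (G : SimpleGraph V) where
  ι : Type
  fin : Fintype ι
  T : SimpleGraph ι
  isTree : T.IsTree
  bag : ι → Set V
  mem_bag : ∀ v : V, ∃ t, v ∈ bag t
  edge_bag : ∀ ⦃u v : V⦄, G.Adj u v → ∃ t, u ∈ bag t ∧ v ∈ bag t
  bag_connected : ∀ v : V, (T.induce {t | v ∈ bag t}).Connected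

/-- `I` is an independent set of `G` contained in `S`, i.e. an independent set of `G[S]`. -/
def IsIndepSetIn {V : Type*} (G : SimpleGraph V) (S : Set V) (I : Finset V) : Prop :=
  ↑I ⊆ S ∧ ∀ u ∈ I, ∀ v ∈ I, u ≠ v → ¬ G.Adj u v

/-- `α(G[S]) ≤ k`. -/
def IndepLE {V : Type*} (G : SimpleGraph V) (S : Set V) (k : ℕ) : Prop :=
  ∀ I : Finset V, IsIndepSetIn G S I → I.card ≤ k

/-- The independence number of the tree decomposition is at most `k`. -/
def TreeDecomp.IndepNumLE {V : Type*} {G : SimpleGraph V} (td : TreeDecomp G) (k : ℕ) : Prop :=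
  ∀ t : td.ι, IndepLE G (td.bag t) k

/-- The tree-independence number of `G` is at most `k`. -/
def treeAlphaLE {V : Type*} (G : SimpleGraph V) (k : ℕ) : Prop :=
  ∃ td : TreeDecomp G, td.IndepNumLE k

/-- The tree-independence number of `G`. -/
noncomputable def treeAlpha {V : Type*} (G : SimpleGraph V) : ℕ :=
  sInf {k | treeAlphaLE G k}

/-- A layering of `G`, encoded by the function sending a vertex to the index of its layer. -/
def IsLayering {V : Type*} (G : SimpleGraph V) (L : V → ℕ) : Prop :=
  ∀ ⦃u v : V⦄, G.Adj u v → (L u : ℤ) ≤ (L v : ℤ) + 1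

/-- The layered tree-independence number of `G` is at most `k`. -/
def layeredTreeAlphaLE {V : Type*} (G : SimpleGraph V) (k : ℕ) : Prop :=
  ∃ (td : TreeDecomp G) (L : V → ℕ), IsLayering G L ∧
    ∀ (t : td.ι) (i : ℕ), IndepLE G (td.bag t ∩ {v | L v = i}) k

/-- The layered tree-independence number of `G`. -/
noncomputable def layeredTreeAlpha {V : Type*} (G : SimpleGraph V) : ℕ :=
  sInf {k | layeredTreeAlphaLE G k}

/-- The number of elements of the multiset `𝒞` containing `v` (with multiplicity). -/
noncomputable def coverCount {V : Type*} (𝒞 : Multiset (Set V)) (v : V) : ℕ :=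
  Multiset.countP (fun C => v ∈ C) 𝒞

/-- `𝒞` is a `β`-general cover: every vertex belongs to at least `β·|𝒞|` elements. -/
def IsGeneralCover {V : Type*} (β : ℝ) (𝒞 : Multiset (Set V)) : Prop :=
  𝒞 ≠ 0 ∧ ∀ v : V, β * (Multiset.card 𝒞 : ℝ) ≤ (coverCount 𝒞 v : ℝ)

/-- The intersection graph of an (indexed) family of sets. -/
def intersectionGraph {ι : Type*} {α : Type*} (D : ι → Set α) : SimpleGraph ι where
  Adj i j := i ≠ j ∧ (D i ∩ D j).Nonempty
  symm := by
    constructor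
    rintro i j ⟨hne, x, hx1, hx2⟩
    exact ⟨hne.symm, x, hx2, hx1⟩
  loopless := by
    constructor
    rintro i ⟨hne, -⟩
    exact hne rfl

/-- The `p`-th power of a graph. -/
def gpower {V : Type*} (G : SimpleGraph V) (p : ℕ) : SimpleGraph V where
  Adj u v := u ≠ v ∧ ∃ w : G.Walk u v, w.length ≤ p
  symm := by
    constructor
    rintro u v ⟨hne, w, hw⟩
    exact ⟨hne.symm, w.reverse, by simpa using hw⟩
  loopless := by
    constructor
    rintro u ⟨hne, -⟩
    exact hne rfl

/-- The axis-aligned closed hypercube of side length `r` with lower corner `x`. -/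
def cube (d : ℕ) (x : EuclideanSpace ℝ (Fin d)) (r : ℝ) : Set (EuclideanSpace ℝ (Fin d)) :=
  {y | ∀ i, x i ≤ y i ∧ y i ≤ x i + r}

/-- The size of an object: the side length of its smallest enclosing axis-aligned hypercube. -/
noncomputable def objSize (d : ℕ) (O : Set (EuclideanSpace ℝ (Fin d))) : ℝ :=
  sInf {r : ℝ | 0 ≤ r ∧ ∃ x, O ⊆ cube d x r}

/-- The collection `O` is `c`-fat. -/
def IsFat {ι : Type*} (d : ℕ) (c : ℝ) (O : ι → Set (EuclideanSpace ℝ (Fin d))) : Prop :=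
  ∀ r : ℝ, 0 < r → ∀ x : EuclideanSpace ℝ (Fin d), ∀ P : Finset ι,
    (∀ i ∈ P, ∀ j ∈ P, i ≠ j → Disjoint (O i) (O j)) →
    (∀ i ∈ P, (O i ∩ cube d x r).Nonempty ∧ r ≤ objSize d (O i)) →
    ∃ pts : Finset (EuclideanSpace ℝ (Fin d)),
      (pts.card : ℝ) ≤ c ∧ ∀ i ∈ P, ∃ p ∈ pts, p ∈ O i

/-- The `n`-dimensional grid graph of width `n`. -/
def gridGraphN (n : ℕ) : SimpleGraph (Fin n → Fin n) where
  Adj a b := ∑ i, ((a i : ℤ) - (b i : ℤ)).natAbs = 1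
  symm := by
    constructor
    intro a b h
    rw [← h]
    exact Finset.sum_congr rfl fun i _ => by omega
  loopless := by
    constructor
    intro a h
    simp at h

/-- The grid graph on `ℤ²`. -/
def latticeGraph : SimpleGraph (ℤ × ℤ) where
  Adj p q := (p.1 - q.1).natAbs + (p.2 - q.2).natAbs = 1
  symm := by
    constructor
    intro p q h
    omega
  loopless := by
    constructor
    intro p h
    simp at h

/-- `P` is (the vertex set of) a path on the integer grid: a finite nonempty subset of `ℤ²`
whose induced subgraph in the grid graph is a path. -/
def IsGridPath (P : Set (ℤ × ℤ)) : Prop :=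
  P.Finite ∧ P.Nonempty ∧ (latticeGraph.induce P).IsTree ∧
    ∀ v : P, ((latticeGraph.induce P).neighborSet v).ncard ≤ 2

set_option linter.unusedSectionVars false
set_option linter.unusedVariables false
set_option linter.unusedTactic false
set_option maxHeartbeats 1000000

open SimpleGraph

section TreeFacts

variable {ι : Type} {T : SimpleGraph ι}

/-- shortest path existence -/
lemma exists_spath (hc : T.Connected) (x r : ι) :
    ∃ p : T.Walk x r, p.IsPath ∧ p.length = T.dist x r := by
  obtain ⟨p0, hp0⟩ := hc.exists_walk_length_eq_dist x r
  refine ⟨p0.bypass, p0.bypass_isPath, le_antisymm ?_ ?_⟩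
  · exact hp0 ▸ p0.length_bypass_le
  · exact SimpleGraph.dist_le _

/-- distance bound for support members -/
lemma dist_le_of_mem_support {x r z : ι} (p : T.Walk x r) (hz : z ∈ p.support) :
    T.dist z r ≤ p.length := by
  have h1 := SimpleGraph.dist_le (p.dropUntil z hz)
  have h2 := congrArg SimpleGraph.Walk.length (p.take_spec hz)
  rw [SimpleGraph.Walk.length_append] at h2
  omega

lemma adj_dist_step (hT : T.IsTree) (r : ι) {x y : ι} (h : T.Adj x y) :
    T.dist x r = T.dist y r + 1 ∨ T.dist y r = T.dist x r + 1 := by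
  have hc := hT.isConnected
  have hd1 : T.dist x y ≤ 1 := by
    simpa using SimpleGraph.dist_le (SimpleGraph.Walk.cons h SimpleGraph.Walk.nil)
  have t1 : T.dist x r ≤ T.dist x y + T.dist y r := hc.dist_triangle
  have hd1' : T.dist y x ≤ 1 := by
    simpa using SimpleGraph.dist_le (SimpleGraph.Walk.cons h.symm SimpleGraph.Walk.nil)
  have t2 : T.dist y r ≤ T.dist y x + T.dist x r := hc.dist_triangle
  have hne : T.dist x r ≠ T.dist y r := by
    intro heq
    obtain ⟨px, hpx, hlx⟩ := exists_spath hc x r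
    have hy : y ∉ px.support := by
      intro hy
      have hxy : 1 ≤ T.dist x y := by
        have := hc.pos_dist_of_ne h.ne
        omega
      have h1 := SimpleGraph.dist_le (px.takeUntil y hy)
      have h2 := SimpleGraph.dist_le (px.dropUntil y hy)
      have h3 := congrArg SimpleGraph.Walk.length (px.take_spec hy)
      rw [SimpleGraph.Walk.length_append] at h3
      omega
    obtain ⟨py, hpy, hly⟩ := exists_spath hc y r
    have hq : (SimpleGraph.Walk.cons h.symm px).IsPath := by
      rw [SimpleGraph.Walk.cons_isPath_iff]; exact ⟨hpx, hy⟩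
    have := isAcyclic_iff_path_unique.mp hT.IsAcyclic ⟨_, hq⟩ ⟨py, hpy⟩
    have hlen := congrArg (fun q : T.Path y r => q.1.length) this
    simp only [SimpleGraph.Walk.length_cons] at hlen
    omega
  omega

lemma unique_parent (hT : T.IsTree) (r : ι) {x₁ x₂ y : ι} (h1 : T.Adj x₁ y) (h2 : T.Adj x₂ y)
    (hd1 : T.dist x₁ r < T.dist y r) (hd2 : T.dist x₂ r < T.dist y r) : x₁ = x₂ := by
  have hc := hT.isConnected
  have key : ∀ x : ι, T.Adj x y → T.dist x r < T.dist y r →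
      ∃ q : T.Walk y r, q.IsPath ∧ q.getVert 1 = x := by
    intro x hx hdx
    obtain ⟨px, hpx, hlx⟩ := exists_spath hc x r
    have hy : y ∉ px.support := by
      intro hy
      have := dist_le_of_mem_support px hy
      omega
    refine ⟨SimpleGraph.Walk.cons hx.symm px, ?_, ?_⟩
    · rw [SimpleGraph.Walk.cons_isPath_iff]; exact ⟨hpx, hy⟩
    · rw [SimpleGraph.Walk.getVert_cons_succ, SimpleGraph.Walk.getVert_zero]
  obtain ⟨q1, hq1, hv1⟩ := key x₁ h1 hd1
  obtain ⟨q2, hq2, hv2⟩ := key x₂ h2 hd2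
  have := isAcyclic_iff_path_unique.mp hT.IsAcyclic ⟨q1, hq1⟩ ⟨q2, hq2⟩
  have : q1 = q2 := congrArg Subtype.val this
  rw [← hv1, ← hv2, this]

end TreeFacts

section TreeFacts2
variable {ι : Type} {T : SimpleGraph ι}

lemma walk_in_set {S : Set ι} : ∀ {a b : ↥S} (_ : (T.induce S).Walk a b),
    ∃ p : T.Walk a b, ∀ z ∈ p.support, z ∈ S := by
  intro a b w
  induction w with
  | nil => exact ⟨SimpleGraph.Walk.nil, by simp⟩
  | @cons u v c h p ih =>
    obtain ⟨q, hq⟩ := ih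
    have hadj : T.Adj u v := by simpa using h
    refine ⟨SimpleGraph.Walk.cons hadj q, ?_⟩
    intro z hz
    rw [SimpleGraph.Walk.support_cons, List.mem_cons] at hz
    rcases hz with rfl | hz
    · exact u.2
    · exact hq z hz

lemma path_in_set {S : Set ι} (hS : (T.induce S).Connected) {a b : ι} (ha : a ∈ S) (hb : b ∈ S) :
    ∃ p : T.Walk a b, p.IsPath ∧ ∀ z ∈ p.support, z ∈ S := by
  obtain ⟨w⟩ := hS.preconnected ⟨a, ha⟩ ⟨b, hb⟩
  obtain ⟨p, hp⟩ := walk_in_set w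
  exact ⟨p.bypass, p.bypass_isPath, fun z hz => hp z (p.support_bypass_subset hz)⟩

variable (hT : T.IsTree) (r : ι) (par : ι → ι)
  (hpar : ∀ y, 0 < T.dist y r → T.Adj (par y) y ∧ T.dist (par y) r + 1 = T.dist y r)
  (huniq : ∀ x y, T.Adj x y → T.dist x r < T.dist y r → x = par y)

include hT hpar huniq

lemma walk_through_parent :
    ∀ (N : ℕ) {c z : ι} (w : T.Walk c z), w.length ≤ N → T.dist z r < T.dist c r →
      par c ∈ w.support := by
  intro N
  induction N with
  | zero =>
    intro c z w hw hd
    cases w with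
    | nil => omega
    | cons h p => simp at hw
  | succ N ih =>
    intro c z w hw hd
    cases w with
    | nil => omega
    | @cons _ x _ h rest =>
      rw [SimpleGraph.Walk.support_cons, List.mem_cons]
      by_cases hcx : T.dist x r < T.dist c r
      · right
        rw [← huniq x c h.symm hcx]
        exact rest.start_mem_support
      · have hstep := adj_dist_step hT r h
        have hxc : T.dist c r < T.dist x r := by omega
        have hpx : par x = c := (huniq c x h hxc).symm
        have hmem : par x ∈ rest.support := by
          refine ih rest ?_ ?_
          · simpa using hw
          · omega
        rw [hpx] at hmem
        have hdrop := ih (rest.dropUntil c hmem) ?_ hd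
        · right
          exact rest.support_dropUntil_subset hmem (hdrop)
        · have h3 := congrArg SimpleGraph.Walk.length (rest.take_spec hmem)
          rw [SimpleGraph.Walk.length_append] at h3
          simp only [SimpleGraph.Walk.length_cons] at hw
          omega

lemma par_mem_of_connected {S : Set ι} (hS : (T.induce S).Connected) {t₀ : ι} (ht₀ : t₀ ∈ S)
    (hmin : ∀ z ∈ S, T.dist t₀ r ≤ T.dist z r) {y : ι} (hy : y ∈ S)
    (hd : T.dist t₀ r < T.dist y r) : par y ∈ S := by
  obtain ⟨p, hp, hsupp⟩ := path_in_set hS hy ht₀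
  cases p with
  | nil => omega
  | @cons _ x _ h rest =>
    by_cases hcx : T.dist x r < T.dist y r
    · rw [← huniq x y h.symm hcx]
      exact hsupp x (by rw [SimpleGraph.Walk.support_cons]; exact List.mem_cons_of_mem _ rest.start_mem_support)
    · have hstep := adj_dist_step hT r h
      have hxc : T.dist y r < T.dist x r := by omega
      have hpx : par x = y := (huniq y x h hxc).symm
      have hmem : par x ∈ rest.support := by
        refine walk_through_parent hT r par hpar huniq rest.length rest le_rfl ?_
        omega
      rw [hpx] at hmem
      rw [SimpleGraph.Walk.cons_isPath_iff] at hp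
      exact absurd hmem hp.2

lemma eq_min_of_connected {S : Set ι} (hS : (T.induce S).Connected) {t₀ : ι} (ht₀ : t₀ ∈ S)
    (hmin : ∀ z ∈ S, T.dist t₀ r ≤ T.dist z r) {y : ι} (hy : y ∈ S)
    (hd : T.dist y r = T.dist t₀ r) : y = t₀ := by
  obtain ⟨p, hp, hsupp⟩ := path_in_set hS hy ht₀
  cases p with
  | nil => rfl
  | @cons _ x _ h rest =>
    exfalso
    have hxS : x ∈ S := hsupp x (by rw [SimpleGraph.Walk.support_cons]; exact List.mem_cons_of_mem _ rest.start_mem_support)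
    have hstep := adj_dist_step hT r h
    have hminx := hmin x hxS
    have hxc : T.dist y r < T.dist x r := by omega
    have hpx : par x = y := (huniq y x h hxc).symm
    have hmem : par x ∈ rest.support := by
      refine walk_through_parent hT r par hpar huniq rest.length rest le_rfl ?_
      omega
    rw [hpx] at hmem
    rw [SimpleGraph.Walk.cons_isPath_iff] at hp
    exact absurd hmem hp.2

lemma iterate_par_dist : ∀ (j : ℕ) (w : ι), j ≤ T.dist w r →
    T.dist (par^[j] w) r = T.dist w r - j := by
  intro j
  induction j with
  | zero => intro w _; simp
  | succ j ih =>
    intro w hj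
    have h0 : 0 < T.dist w r := by omega
    have hp := hpar w h0
    rw [Function.iterate_succ_apply]
    rw [ih (par w) (by omega)]
    omega

lemma iterate_par_mem {S : Set ι} (hS : (T.induce S).Connected) {t₀ : ι} (ht₀ : t₀ ∈ S)
    (hmin : ∀ z ∈ S, T.dist t₀ r ≤ T.dist z r) :
    ∀ (j : ℕ) (w : ι), w ∈ S → j + T.dist t₀ r ≤ T.dist w r → par^[j] w ∈ S := by
  intro j
  induction j with
  | zero => intro w hw _; simpa using hw
  | succ j ih =>
    intro w hw hj
    rw [Function.iterate_succ_apply]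
    have h0 : 0 < T.dist w r := by omega
    have hp := hpar w h0
    refine ih (par w) ?_ ?_
    · exact par_mem_of_connected hT r par hpar huniq hS ht₀ hmin hw (by omega)
    · omega

lemma iterate_par_top {S : Set ι} (hS : (T.induce S).Connected) {t₀ : ι} (ht₀ : t₀ ∈ S)
    (hmin : ∀ z ∈ S, T.dist t₀ r ≤ T.dist z r) {w : ι} (hw : w ∈ S) :
    par^[T.dist w r - T.dist t₀ r] w = t₀ := by
  have hle : T.dist t₀ r ≤ T.dist w r := hmin w hw
  set j := T.dist w r - T.dist t₀ r with hj
  have hmem : par^[j] w ∈ S :=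
    iterate_par_mem hT r par hpar huniq hS ht₀ hmin j w hw (by omega)
  have hdist : T.dist (par^[j] w) r = T.dist t₀ r := by
    rw [iterate_par_dist hT r par hpar huniq j w (by omega)]; omega
  exact eq_min_of_connected hT r par hpar huniq hS ht₀ hmin hmem hdist

end TreeFacts2


section Helly
variable {V : Type} {H : SimpleGraph V}

lemma helly_cross (td : TreeDecomp H) (A B : Finset V) (hA : A.Nonempty) (hB : B.Nonempty)
    (hcross : ∀ a ∈ A, ∀ b ∈ B, H.Adj a b) :
    ∃ t, (↑A : Set V) ⊆ td.bag t ∨ (↑B : Set V) ⊆ td.bag t := by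
  haveI := td.fin
  classical
  obtain ⟨a₀, ha₀⟩ := hA
  obtain ⟨r, -⟩ := td.mem_bag a₀
  set T := td.T with hTdef
  have hT : T.IsTree := td.isTree
  have hc : T.Connected := hT.isConnected
  -- parent function
  have hparex : ∀ y : td.ι, 0 < T.dist y r → ∃ x, T.Adj x y ∧ T.dist x r + 1 = T.dist y r := by
    intro y hy
    obtain ⟨p, hp, hl⟩ := exists_spath hc y r
    cases p with
    | nil => rw [SimpleGraph.dist_self] at hy; omega
    | @cons _ x _ h rest =>
      refine ⟨x, h.symm, ?_⟩
      have h1 := SimpleGraph.dist_le rest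
      have hstep := adj_dist_step hT r h
      simp only [SimpleGraph.Walk.length_cons] at hl
      omega
  set par : td.ι → td.ι := fun y =>
    if h : ∃ x, T.Adj x y ∧ T.dist x r + 1 = T.dist y r then h.choose else y with hpardef
  have hpar : ∀ y, 0 < T.dist y r → T.Adj (par y) y ∧ T.dist (par y) r + 1 = T.dist y r := by
    intro y hy
    have hex := hparex y hy
    simp only [hpardef, dif_pos hex]
    exact hex.choose_spec
  have huniq : ∀ x y, T.Adj x y → T.dist x r < T.dist y r → x = par y := by
    intro x y hxy hd
    have hy : 0 < T.dist y r := by omega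
    have hp := hpar y hy
    exact unique_parent hT r hxy hp.1 hd (by omega)
  -- tops
  have exmin : ∀ v : V, ∃ t, v ∈ td.bag t ∧ ∀ z, v ∈ td.bag z → T.dist t r ≤ T.dist z r := by
    intro v
    obtain ⟨t0, ht0⟩ := td.mem_bag v
    obtain ⟨t, htmem, htmin⟩ := Finset.exists_min_image
      (Finset.univ.filter (fun t => v ∈ td.bag t)) (fun t => T.dist t r)
      ⟨t0, by simp [ht0]⟩
    rw [Finset.mem_filter] at htmem
    refine ⟨t, htmem.2, fun z hz => htmin z (by simp [hz])⟩
  choose top htop hmin using exmin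
  -- share lemma
  have share : ∀ u v : V, H.Adj u v → T.dist (top u) r ≤ T.dist (top v) r →
      v ∈ td.bag (top v) ∧ u ∈ td.bag (top v) := by
    intro u v hadj hd
    refine ⟨htop v, ?_⟩
    obtain ⟨w, hwu, hwv⟩ := td.edge_bag hadj
    have hconnu := td.bag_connected u
    have hconnv := td.bag_connected v
    have hwv' : w ∈ {t | v ∈ td.bag t} := hwv
    have hwu' : w ∈ {t | u ∈ td.bag t} := hwu
    have htopv := iterate_par_top hT r par hpar huniq hconnv (htop v)
      (fun z hz => hmin v z hz) hwv'
    have hj : T.dist w r - T.dist (top v) r + T.dist (top u) r ≤ T.dist w r := by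
      have h1 := hmin v w hwv
      have h2 := hmin u w hwu
      omega
    have := iterate_par_mem hT r par hpar huniq hconnu (htop u)
      (fun z hz => hmin u z hz) (T.dist w r - T.dist (top v) r) w hwu' hj
    rw [htopv] at this
    exact this
  -- max over A ∪ B
  obtain ⟨vstar, hvstar, hvmax⟩ := Finset.exists_max_image (A ∪ B) (fun v => T.dist (top v) r)
    ⟨a₀, Finset.mem_union_left _ ha₀⟩
  rw [Finset.mem_union] at hvstar
  rcases hvstar with hva | hvb
  · refine ⟨top vstar, Or.inr ?_⟩
    intro b hb
    have hb' : b ∈ B := hb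
    have hadj := hcross vstar hva b hb'
    exact (share b vstar hadj.symm (hvmax b (Finset.mem_union_right _ hb'))).2
  · refine ⟨top vstar, Or.inl ?_⟩
    intro a ha
    have ha' : a ∈ A := ha
    have hadj := hcross a ha' vstar hvb
    exact (share a vstar hadj (hvmax a (Finset.mem_union_left _ ha'))).2

end Helly

section ParentGraph

variable {ι : Type}

/-- The graph induced by a parent function. -/
def parGraph (par : ι → ι) : SimpleGraph ι := SimpleGraph.fromRel (fun x y => par x = y)

lemma parGraph_adj (par : ι → ι) {x y : ι} :
    (parGraph par).Adj x y ↔ x ≠ y ∧ (par x = y ∨ par y = x) := by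
  simp [parGraph]

variable (r₀ : ι) (par : ι → ι) (dep : ι → ℕ)
  (hroot : par r₀ = r₀) (hdep : ∀ x, x ≠ r₀ → dep (par x) < dep x)

include hroot hdep

lemma parGraph_adj_par {x : ι} (hx : x ≠ r₀) : (parGraph par).Adj x (par x) := by
  rw [parGraph_adj]
  refine ⟨?_, Or.inl rfl⟩
  intro h
  have := hdep x hx
  rw [← h] at this
  omega

lemma parGraph_reach (x : ι) : (parGraph par).Reachable x r₀ := by
  by_cases hx : x = r₀
  · exact hx ▸ Reachable.refl _
  · have h1 : dep (par x) < dep x := hdep x hx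
    have := parGraph_reach (par x)
    exact (parGraph_adj_par r₀ par dep hroot hdep hx).reachable.trans this
termination_by dep x

lemma parGraph_dep_iterate : ∀ (n : ℕ) (z : ι), dep (par^[n] z) ≤ dep z := by
  intro n
  induction n with
  | zero => simp
  | succ n ih =>
    intro z
    rw [Function.iterate_succ_apply]
    refine le_trans (ih (par z)) ?_
    by_cases hz : z = r₀
    · rw [hz, hroot]
    · exact le_of_lt (hdep z hz)

lemma parGraph_isTree : (parGraph par).IsTree := by
  constructor
  · rw [connected_iff]
    exact ⟨fun x y => ((parGraph_reach r₀ par dep hroot hdep x).trans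
      (parGraph_reach r₀ par dep hroot hdep y).symm), ⟨r₀⟩⟩
  · rw [isAcyclic_iff_forall_adj_isBridge]
    have key : ∀ x y : ι, par x = y → (parGraph par).Adj x y → (parGraph par).IsBridge s(x, y) := by
      intro x y hpxy hadj
      rw [isBridge_iff]
      refine ?_
      intro hreach
      obtain ⟨p⟩ := hreach
      set S : Set ι := {z | ∃ n, par^[n] z = x} with hS
      have hxS : x ∈ S := ⟨0, rfl⟩
      have hyS : y ∉ S := by
        rintro ⟨n, hn⟩
        have hxr : x ≠ r₀ := by
          intro h
          have hy : y = r₀ := by rw [← hpxy, h, hroot]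
          exact hadj.ne (h.trans hy.symm)
        have h1 : dep y < dep x := hpxy ▸ hdep x hxr
        have h2 := parGraph_dep_iterate r₀ par dep hroot hdep n y
        rw [hn] at h2
        omega
      have hwalk : ∀ (a b : ι) (q : ((parGraph par) \ fromEdgeSet {s(x, y)}).Walk a b),
          a ∈ S → b ∈ S := by
        intro a b q
        induction q with
        | nil => exact id
        | @cons c d e hcd q ih =>
          intro hc
          refine ih ?_
          have h1 : (parGraph par).Adj c d ∧ ¬ (fromEdgeSet {s(x,y)}).Adj c d := hcd
          have hne' : c ≠ d := h1.1.ne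
          have hnotmem : s(c, d) ≠ s(x, y) := by
            intro hh
            exact h1.2 (by rw [fromEdgeSet_adj]; exact ⟨by simp [hh], hne'⟩)
          have hadj' := (parGraph_adj par).mp h1.1
          rcases hadj'.2 with hpc | hpd
          · obtain ⟨n, hn⟩ := hc
            have hcx : c ≠ x := by
              intro h
              have hdy : d = y := by rw [← hpc, h, hpxy]
              exact hnotmem (by rw [h, hdy])
            cases n with
            | zero => exact absurd hn hcx
            | succ n =>
              refine ⟨n, ?_⟩
              rw [Function.iterate_succ_apply, hpc] at hn
              exact hn
          · obtain ⟨n, hn⟩ := hc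
            exact ⟨n + 1, by rw [Function.iterate_succ_apply, hpd, hn]⟩
      exact hyS (hwalk x y p hxS)
    intro v w hvw
    rcases (parGraph_adj par).mp hvw with ⟨hne, h | h⟩
    · exact key v w h hvw
    · have := key w v h hvw.symm
      rwa [Sym2.eq_swap] at this

end ParentGraph

lemma walk_length_ge_potential {V : Type*} {G : SimpleGraph V} (φ : V → ℤ)
    (h : ∀ ⦃a b⦄, G.Adj a b → |φ a - φ b| ≤ 1) {x y : V} (w : G.Walk x y) :
    |φ x - φ y| ≤ w.length := by
  induction w with
  | nil => simp
  | @cons a b c hab w ih =>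
    have h1 := h hab
    have h2 : |φ a - φ c| ≤ |φ a - φ b| + |φ b - φ c| := by
      have := abs_sub_abs_le_abs_sub (φ a - φ c) 0
      calc |φ a - φ c| = |(φ a - φ b) + (φ b - φ c)| := by ring_nf
        _ ≤ |φ a - φ b| + |φ b - φ c| := abs_add_le _ _
    rw [SimpleGraph.Walk.length_cons]
    push_cast
    omega

section Construction

abbrev Vt (s m : ℕ) := (Fin m × Fin m) ⊕ (Fin 2 × Fin m × Fin s)

def inA {m : ℕ} (j : Fin 2) (t : Fin m) (c : Fin m × Fin m) : Prop :=
  if j = 0 then c.1 = t else c.2 = t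

def Gbase (s m : ℕ) : (Vt s m) → (Vt s m) → Prop
  | Sum.inl _, Sum.inl _ => True
  | Sum.inr (j, t, i), Sum.inl c => i.val + 1 = s ∧ inA j t c
  | Sum.inr (j, t, i), Sum.inr (j', t', i') => j = j' ∧ t = t' ∧ i'.val = i.val + 1
  | Sum.inl _, Sum.inr _ => False

def Gc (s m : ℕ) : SimpleGraph (Vt s m) := SimpleGraph.fromRel (Gbase s m)

variable {s m : ℕ}

lemma adj_cc {c c' : Fin m × Fin m} (h : c ≠ c') : (Gc s m).Adj (Sum.inl c) (Sum.inl c') := by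
  rw [Gc, SimpleGraph.fromRel_adj]
  exact ⟨by simp [h], Or.inl trivial⟩

lemma adj_wc {j : Fin 2} {t : Fin m} {i : Fin s} {c : Fin m × Fin m}
    (h1 : i.val + 1 = s) (h2 : inA j t c) :
    (Gc s m).Adj (Sum.inr (j, t, i)) (Sum.inl c) := by
  rw [Gc, SimpleGraph.fromRel_adj]
  exact ⟨by simp, Or.inl ⟨h1, h2⟩⟩

lemma adj_ww {j : Fin 2} {t : Fin m} {i i' : Fin s} (h : i'.val = i.val + 1) :
    (Gc s m).Adj (Sum.inr (j, t, i)) (Sum.inr (j, t, i')) := by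
  rw [Gc, SimpleGraph.fromRel_adj]
  refine ⟨fun hcontra => ?_, Or.inl ⟨rfl, rfl, h⟩⟩
  simp only [Sum.inr.injEq, Prod.mk.injEq] at hcontra
  have := congrArg Fin.val hcontra.2.2
  omega

lemma walk_up {j : Fin 2} {t : Fin m} : ∀ (d : ℕ) (a b : Fin s), b.val = a.val + d →
    ∃ w : (Gc s m).Walk (Sum.inr (j, t, a)) (Sum.inr (j, t, b)), w.length = d := by
  intro d
  induction d with
  | zero =>
    intro a b hb
    have : a = b := Fin.ext (by omega)
    subst this
    exact ⟨SimpleGraph.Walk.nil, rfl⟩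
  | succ d ih =>
    intro a b hb
    have hlt : a.val + d < s := by have := b.isLt; omega
    obtain ⟨w, hw⟩ := ih a ⟨a.val + d, hlt⟩ rfl
    refine ⟨w.concat (adj_ww (by simp [hb]; omega)), ?_⟩
    rw [SimpleGraph.Walk.length_concat, hw]


/-- some element of the attachment set -/
def touch {m : ℕ} (j : Fin 2) (t : Fin m) (c : Fin m × Fin m) : Fin m × Fin m :=
  if j = 0 then (t, c.2) else (c.1, t)

lemma touch_inA {j : Fin 2} {t : Fin m} (c : Fin m × Fin m) : inA j t (touch j t c) := by
  by_cases hj : j = 0 <;> simp [inA, touch, hj]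

lemma walk_to_clique (hs : 1 ≤ s) (v : Vt s m) (c : Fin m × Fin m) :
    v = Sum.inl c ∨ ∃ w : (Gc s m).Walk v (Sum.inl c), w.length ≤ 2 * s := by
  match v with
  | Sum.inl c' =>
    by_cases h : c' = c
    · exact Or.inl (by rw [h])
    · exact Or.inr ⟨(adj_cc h).toWalk, by simp; omega⟩
  | Sum.inr (j, t, i) =>
    right
    have htop : (⟨s - 1, by omega⟩ : Fin s).val = i.val + (s - 1 - i.val) := by
      have := i.isLt; simp; omega
    obtain ⟨w1, hw1⟩ := walk_up (s - 1 - i.val) i ⟨s - 1, by omega⟩ htop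
    have htops : (⟨s - 1, by omega⟩ : Fin s).val + 1 = s := by simp; omega
    by_cases hc : inA j t c
    · refine ⟨w1.concat (adj_wc htops hc), ?_⟩
      rw [SimpleGraph.Walk.length_concat, hw1]; omega
    · have htne : touch j t c ≠ c := fun h => hc (h ▸ touch_inA c)
      refine ⟨(w1.concat (adj_wc htops (touch_inA c))).concat (adj_cc htne), ?_⟩
      rw [SimpleGraph.Walk.length_concat, SimpleGraph.Walk.length_concat, hw1]; omega

lemma Hadj_dom (hs : 1 ≤ s) (v : Vt s m) (c : Fin m × Fin m) (h : v ≠ Sum.inl c) :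
    (gpower (Gc s m) (2 * s)).Adj v (Sum.inl c) := by
  rcases walk_to_clique hs v c with h' | ⟨w, hw⟩
  · exact absurd h' h
  · exact ⟨h, w, hw⟩

lemma Hadj_cross (hs : 1 ≤ s) (hm : 0 < m) (t t' : Fin m) :
    (gpower (Gc s m) (2 * s)).Adj (Sum.inr (0, t, (⟨0, hs⟩ : Fin s)))
      (Sum.inr (1, t', (⟨0, hs⟩ : Fin s))) := by
  refine ⟨?_, ?_⟩
  · intro hcontra
    simp only [Sum.inr.injEq, Prod.mk.injEq] at hcontra
    exact absurd hcontra.1 (by decide)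
  have htop : (⟨s - 1, by omega⟩ : Fin s).val = (⟨0, hs⟩ : Fin s).val + (s - 1) := by simp
  obtain ⟨w1, hw1⟩ := walk_up (j := 0) (t := t) (s - 1) ⟨0, hs⟩ ⟨s - 1, by omega⟩ htop
  obtain ⟨w2, hw2⟩ := walk_up (j := 1) (t := t') (s - 1) ⟨0, hs⟩ ⟨s - 1, by omega⟩ htop
  have htops : (⟨s - 1, by omega⟩ : Fin s).val + 1 = s := by simp; omega
  have e1 : (Gc s m).Adj (Sum.inr (0, t, (⟨s-1, by omega⟩ : Fin s))) (Sum.inl (t, t')) :=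
    adj_wc htops (by simp [inA])
  have e2 : (Gc s m).Adj (Sum.inl (t, t')) (Sum.inr (1, t', (⟨s-1, by omega⟩ : Fin s))) :=
    (adj_wc htops (by simp [inA])).symm
  refine ⟨((w1.concat e1).concat e2).append w2.reverse, ?_⟩
  simp only [SimpleGraph.Walk.length_append, SimpleGraph.Walk.length_concat,
    SimpleGraph.Walk.length_reverse, hw1, hw2]
  omega

/-- the potential function certifying that far-apart branch tips are non-adjacent in the power -/
noncomputable def pot (s : ℕ) {m : ℕ} (j : Fin 2) (t : Fin m) : Vt s m → ℤ
  | Sum.inl c => if inA j t c then (s : ℤ) else (s : ℤ) + 1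
  | Sum.inr (j', t', i) =>
      if j' = j ∧ t' = t then (i.val : ℤ)
      else if j' = j then 2 * s + 1 - (i.val : ℤ) else 2 * s - (i.val : ℤ)

lemma inA_unique {j : Fin 2} {t t' : Fin m} {c : Fin m × Fin m} (h1 : inA j t c)
    (h2 : inA j t' c) : t = t' := by
  by_cases hj : j = 0 <;> simp_all [inA]

lemma pot_lipschitz (hs : 1 ≤ s) (j : Fin 2) (t : Fin m) :
    ∀ ⦃a b : Vt s m⦄, (Gc s m).Adj a b → |pot s j t a - pot s j t b| ≤ 1 := by
  have base : ∀ a b : Vt s m, Gbase s m a b → |pot s j t a - pot s j t b| ≤ 1 := by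
    intro a b hab
    match a, b with
    | Sum.inl c, Sum.inl c' =>
      by_cases h1 : inA j t c <;> by_cases h2 : inA j t c' <;>
        simp only [pot, h1, h2, if_true, if_false] <;>
        (rw [abs_le]; constructor <;> omega)
    | Sum.inr (j', t', i), Sum.inl c =>
      obtain ⟨hi, hA⟩ := hab
      have hilt := i.isLt
      by_cases hj : j' = j
      · subst hj
        by_cases ht : t' = t
        · subst ht
          have hc : inA j' t' c := hA
          simp only [pot, hc, and_self, if_true, if_false]
          rw [abs_le]; constructor <;> push_cast <;> omega
        · have hnA : ¬ inA j' t c := fun h => ht (inA_unique hA h)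
          simp only [pot, ht, hnA, and_false, if_false, if_true]
          rw [abs_le]; constructor <;> push_cast <;> omega
      · by_cases hc : inA j t c <;>
          simp only [pot, hj, hc, false_and, if_false, if_true] <;>
          (rw [abs_le]; constructor <;> push_cast <;> omega)
    | Sum.inr (j', t', i), Sum.inr (j'', t'', i') =>
      obtain ⟨hj, ht, hi⟩ := hab
      subst hj; subst ht
      have hilt := i.isLt
      have hilt' := i'.isLt
      by_cases hj : j' = j <;> by_cases ht : t' = t <;>
        simp only [pot, hj, ht, and_self, and_true, true_and, and_false, false_and,
          if_true, if_false] <;>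
        (rw [abs_le]; constructor <;> push_cast <;> omega)
    | Sum.inl _, Sum.inr _ => exact absurd hab id
  intro a b hab
  rw [Gc, SimpleGraph.fromRel_adj] at hab
  rcases hab.2 with h | h
  · exact base a b h
  · rw [abs_sub_comm]; exact base b a h

lemma Hnonadj (hs : 1 ≤ s) {j : Fin 2} {t t' : Fin m} (hne : t ≠ t') :
    ¬ (gpower (Gc s m) (2 * s)).Adj (Sum.inr (j, t, (⟨0, hs⟩ : Fin s)))
      (Sum.inr (j, t', (⟨0, hs⟩ : Fin s))) := by
  rintro ⟨hne', w, hw⟩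
  have := walk_length_ge_potential (pot s j t) (pot_lipschitz hs j t) w
  have h1 : pot s j t (Sum.inr (j, t, (⟨0, hs⟩ : Fin s))) = 0 := by
    simp [pot]
  have h2 : pot s j t (Sum.inr (j, t', (⟨0, hs⟩ : Fin s))) = 2 * s + 1 := by
    simp [pot, Ne.symm hne]
  rw [h1, h2] at this
  simp only [zero_sub, abs_neg] at this
  have h3 : |(2 * (s:ℤ) + 1)| = 2 * s + 1 := abs_of_nonneg (by positivity)
  rw [h3] at this
  push_cast at this
  omega

end Construction


section HubConn

lemma hub_connected {ι : Type} {T : SimpleGraph ι} {S : Set ι} {hub : ι} (hhub : hub ∈ S)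
    (h : ∀ x ∈ S, x = hub ∨ T.Adj x hub) : (T.induce S).Connected := by
  rw [SimpleGraph.connected_iff]
  refine ⟨?_, ⟨⟨hub, hhub⟩⟩⟩
  have key : ∀ x : ↥S, (T.induce S).Reachable x ⟨hub, hhub⟩ := by
    rintro ⟨x, hx⟩
    rcases h x hx with rfl | hadj
    · exact SimpleGraph.Reachable.refl _
    · refine SimpleGraph.Adj.reachable ?_
      simp only [SimpleGraph.comap_adj, Function.Embedding.coe_subtype]
      exact hadj
  intro a b
  exact (key a).trans (key b).symm

end HubConn

section TDGc
variable {s m : ℕ}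

abbrev It (s m : ℕ) := Unit ⊕ (Fin 2 × Fin m × Fin s)

def par0 (s m : ℕ) : It s m → It s m
  | Sum.inl _ => Sum.inl ()
  | Sum.inr (j, t, i) => if h : i.val + 1 < s then Sum.inr (j, t, ⟨i.val + 1, h⟩) else Sum.inl ()

def dep0 (s m : ℕ) : It s m → ℕ
  | Sum.inl _ => 0
  | Sum.inr (_, _, i) => s - i.val

lemma par0_tree : (parGraph (par0 s m)).IsTree := by
  apply parGraph_isTree (Sum.inl ()) _ (dep0 s m) rfl
  intro x hx
  match x with
  | Sum.inl () => exact absurd rfl hx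
  | Sum.inr (j, t, i) =>
    have := i.isLt
    by_cases h : i.val + 1 < s <;> simp only [par0, dep0, h, dif_pos, dif_neg, dite_true,
      dite_false] <;> simp [dep0] <;> omega

def bag0 (s m : ℕ) : It s m → Set (Vt s m)
  | Sum.inl _ => {v | ∃ c, v = Sum.inl c}
  | Sum.inr (j, t, i) => {v | v = Sum.inr (j, t, i) ∨
      (i.val + 1 = s ∧ ∃ c, inA j t c ∧ v = Sum.inl c) ∨
      (∃ h : i.val + 1 < s, v = Sum.inr (j, t, ⟨i.val + 1, h⟩))}

lemma bag0_clique : ∀ (node : It s m) {u v : Vt s m}, u ∈ bag0 s m node → v ∈ bag0 s m node →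
    u ≠ v → (Gc s m).Adj u v := by
  intro node u v hu hv huv
  match node with
  | Sum.inl () =>
    obtain ⟨c, rfl⟩ := hu
    obtain ⟨c', rfl⟩ := hv
    exact adj_cc (fun h => huv (by rw [h]))
  | Sum.inr (j, t, i) =>
    rcases hu with rfl | ⟨hi, c, hA, rfl⟩ | ⟨h, rfl⟩
    · rcases hv with rfl | ⟨hi, c, hA, rfl⟩ | ⟨h, rfl⟩
      · exact absurd rfl huv
      · exact adj_wc hi hA
      · exact adj_ww (by simp)
    · rcases hv with rfl | ⟨hi', c', hA', rfl⟩ | ⟨h, rfl⟩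
      · exact (adj_wc hi hA).symm
      · exact adj_cc (fun h => huv (by rw [h]))
      · omega
    · rcases hv with rfl | ⟨hi', c', hA', rfl⟩ | ⟨h', rfl⟩
      · exact (adj_ww (by simp)).symm
      · omega
      · exact absurd rfl huv

noncomputable def tdGc (s m : ℕ) : TreeDecomp (Gc s m) where
  ι := It s m
  fin := inferInstance
  T := parGraph (par0 s m)
  isTree := par0_tree
  bag := bag0 s m
  mem_bag := by
    intro v
    match v with
    | Sum.inl c => exact ⟨Sum.inl (), ⟨c, rfl⟩⟩
    | Sum.inr (j, t, i) => exact ⟨Sum.inr (j, t, i), Or.inl rfl⟩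
  edge_bag := by
    have base : ∀ u v : Vt s m, Gbase s m u v → ∃ t, u ∈ bag0 s m t ∧ v ∈ bag0 s m t := by
      intro u v huv
      match u, v with
      | Sum.inl c, Sum.inl c' => exact ⟨Sum.inl (), ⟨c, rfl⟩, ⟨c', rfl⟩⟩
      | Sum.inr (j, t, i), Sum.inl c =>
        obtain ⟨hi, hA⟩ := huv
        exact ⟨Sum.inr (j, t, i), Or.inl rfl, Or.inr (Or.inl ⟨hi, c, hA, rfl⟩)⟩
      | Sum.inr (j, t, i), Sum.inr (j', t', i') =>
        obtain ⟨rfl, rfl, hi⟩ := huv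
        have hlt : i.val + 1 < s := by have := i'.isLt; omega
        refine ⟨Sum.inr (j, t, i), Or.inl rfl, Or.inr (Or.inr ⟨hlt, ?_⟩)⟩
        have hfe : (⟨i.val + 1, hlt⟩ : Fin s) = i' := Fin.ext (by show i.val + 1 = i'.val; omega)
        rw [hfe]
      | Sum.inl _, Sum.inr _ => exact absurd huv id
    intro u v huv
    rw [Gc, SimpleGraph.fromRel_adj] at huv
    rcases huv.2 with h | h
    · exact base u v h
    · obtain ⟨t, h1, h2⟩ := base v u h
      exact ⟨t, h2, h1⟩
  bag_connected := by
    intro v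
    match v with
    | Sum.inl c =>
      have hhub : Sum.inl c ∈ bag0 s m (Sum.inl ()) := ⟨c, rfl⟩
      refine hub_connected (hub := Sum.inl ()) hhub ?_
      rintro (⟨⟩ | ⟨j, t, i⟩) hx
      · exact Or.inl rfl
      · right
        rcases hx with hx | ⟨hi, c', hA, hc'⟩ | ⟨h, hx⟩
        · exact absurd hx (by simp)
        · rw [parGraph_adj]
          refine ⟨by simp, Or.inl ?_⟩
          simp only [par0]
          rw [dif_neg (by omega)]
        · exact absurd hx (by simp)
    | Sum.inr (j, t, i) =>
      have hhub : (Sum.inr (j, t, i) : Vt s m) ∈ bag0 s m (Sum.inr (j, t, i)) := Or.inl rfl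
      refine hub_connected (hub := Sum.inr (j, t, i)) hhub ?_
      rintro (⟨⟩ | ⟨j', t', i'⟩) hx
      · obtain ⟨c, hc⟩ := hx
        exact absurd hc (by simp)
      · rcases hx with hx | ⟨hi, c', hA, hc'⟩ | ⟨h, hx⟩
        · left
          simp only [Sum.inr.injEq] at hx
          rw [hx]
        · exact absurd hc' (by simp)
        · right
          rw [parGraph_adj]
          simp only [Sum.inr.injEq, Prod.mk.injEq] at hx
          obtain ⟨rfl, rfl, hieq⟩ := hx
          have hival : i.val = i'.val + 1 := by rw [hieq]
          refine ⟨?_, Or.inl ?_⟩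
          · intro hcontra
            simp only [Sum.inr.injEq, Prod.mk.injEq] at hcontra
            have := congrArg Fin.val hcontra.2.2
            omega
          · simp only [par0]
            rw [dif_pos h]
            rw [hieq]

lemma tdGc_indep : (tdGc s m).IndepNumLE 1 := by
  intro node I hI
  rw [Finset.card_le_one]
  intro a ha b hb
  by_contra hne
  exact hI.2 a ha b hb hne (bag0_clique node (hI.1 ha) (hI.1 hb) hne)

end TDGc

section Final

noncomputable def tdTrivial {V : Type} [Fintype V] (G : SimpleGraph V) : TreeDecomp G where
  ι := Unit
  fin := inferInstance
  T := parGraph (id : Unit → Unit)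
  isTree := parGraph_isTree () id (fun _ => 0) rfl (fun x hx => absurd rfl hx)
  bag := fun _ => Set.univ
  mem_bag := fun v => ⟨(), trivial⟩
  edge_bag := fun u v _ => ⟨(), trivial, trivial⟩
  bag_connected := fun v => hub_connected (hub := ()) trivial (fun x _ => Or.inl rfl)

lemma layered_trivial {V : Type} [Fintype V] (G : SimpleGraph V) :
    layeredTreeAlphaLE G (Fintype.card V) := by
  refine ⟨tdTrivial G, fun _ => 0, fun u v _ => by simp, fun t i I hI => ?_⟩
  exact le_trans (Finset.card_le_univ I) (le_of_eq Finset.card_univ)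

/-- For every even `k ≥ 2` and every `n`, there is a graph `G` with
tree-independence number `1` (hence layered tree-independence number at most `1`) whose `k`-th
power has layered tree-independence number at least `n`. -/
theorem stmt4 (k : ℕ) (hk : 2 ≤ k) (hke : Even k) (n : ℕ) :
    ∃ (V : Type) (_ : Fintype V) (G : SimpleGraph V),
      treeAlpha G = 1 ∧ layeredTreeAlpha G ≤ 1 ∧ n ≤ layeredTreeAlpha (gpower G k) := by
  obtain ⟨s, hs2⟩ := hke
  have hs : 1 ≤ s := by omega
  have hknat : k = 2 * s := by omega
  set m : ℕ := 3 * n + 3 with hm_def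
  have hm : 0 < m := by omega
  refine ⟨Vt s m, inferInstance, Gc s m, ?_, ?_, ?_⟩
  · -- treeAlpha = 1
    have h1 : treeAlphaLE (Gc s m) 1 := ⟨tdGc s m, tdGc_indep⟩
    have h0 : ¬ treeAlphaLE (Gc s m) 0 := by
      rintro ⟨td, htd⟩
      obtain ⟨t, ht⟩ := td.mem_bag (Sum.inl (⟨0, hm⟩, ⟨0, hm⟩))
      have hcard := htd t {Sum.inl (⟨0, hm⟩, ⟨0, hm⟩)}
        ⟨by simpa using ht, by intro u hu v hv huv; simp at hu hv; rw [hu, hv] at huv; exact absurd rfl huv⟩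
      simp at hcard
    apply le_antisymm
    · exact Nat.sInf_le h1
    · rw [Nat.one_le_iff_ne_zero]
      intro hzero
      simp only [treeAlpha] at hzero
      rw [Nat.sInf_eq_zero] at hzero
      rcases hzero with h | h
      · exact h0 h
      · rw [Set.eq_empty_iff_forall_notMem] at h
        exact h 1 h1
  · -- layeredTreeAlpha ≤ 1
    refine Nat.sInf_le ⟨tdGc s m, fun _ => 0, fun u v _ => by simp, fun t i I hI =>
      tdGc_indep t I ⟨fun x hx => (hI.1 hx).1, hI.2⟩⟩
  · -- main lower bound
    refine le_csInf ⟨Fintype.card (Vt s m), layered_trivial _⟩ ?_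
    intro b hb
    by_contra hnb
    push_neg at hnb
    obtain ⟨td, L, hLay, hInd⟩ := hb
    set c0 : Vt s m := Sum.inl (⟨0, hm⟩, ⟨0, hm⟩) with hc0
    set i₀ : ℕ := L c0 with hi₀
    have hlayer : ∀ v : Vt s m, L v = i₀ - 1 ∨ L v = i₀ ∨ L v = i₀ + 1 := by
      intro v
      by_cases hv : v = c0
      · rw [hv]
        exact Or.inr (Or.inl hi₀.symm)
      · have hadj : (gpower (Gc s m) k).Adj v c0 := by rw [hknat]; exact Hadj_dom hs v _ hv
        have l1 := hLay hadj
        have l2 := hLay hadj.symm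
        omega
    set P : Fin 2 → Finset (Vt s m) := fun j =>
      Finset.univ.image (fun t : Fin m => Sum.inr (j, t, (⟨0, hs⟩ : Fin s))) with hP
    have hPinj : ∀ j : Fin 2, Function.Injective
        (fun t : Fin m => (Sum.inr (j, t, (⟨0, hs⟩ : Fin s)) : Vt s m)) := by
      intro j a b hab
      simp only [Sum.inr.injEq, Prod.mk.injEq] at hab
      exact hab.2.1
    have hPcard : ∀ j, (P j).card = m := by
      intro j
      rw [hP]
      rw [Finset.card_image_of_injective _ (hPinj j), Finset.card_univ, Fintype.card_fin]
    have hPmem : ∀ (j : Fin 2) (v : Vt s m), v ∈ P j ↔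
        ∃ t : Fin m, v = Sum.inr (j, t, (⟨0, hs⟩ : Fin s)) := by
      intro j v
      simp only [hP, Finset.mem_image, Finset.mem_univ, true_and]
      exact ⟨fun ⟨t, ht⟩ => ⟨t, ht.symm⟩, fun ⟨t, ht⟩ => ⟨t, ht.symm⟩⟩
    have hPne : ∀ j : Fin 2, (P j).Nonempty := by
      intro j
      exact ⟨_, Finset.mem_image_of_mem _ (Finset.mem_univ (⟨0, hm⟩ : Fin m))⟩
    have hcross : ∀ a ∈ P 0, ∀ b' ∈ P 1, (gpower (Gc s m) k).Adj a b' := by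
      intro a ha b' hb'
      obtain ⟨t, rfl⟩ := (hPmem 0 a).mp ha
      obtain ⟨t', rfl⟩ := (hPmem 1 b').mp hb'
      rw [hknat]
      exact Hadj_cross hs hm t t'
    obtain ⟨tb, hbag⟩ := helly_cross td (P 0) (P 1) (hPne 0) (hPne 1) hcross
    have main : ∀ j : Fin 2, (↑(P j) : Set (Vt s m)) ⊆ td.bag tb → False := by
      intro j hsub
      have hfil : ∀ i : ℕ, ((P j).filter (fun v => L v = i)).card ≤ b := by
        intro i
        apply hInd tb i
        constructor
        · intro v hv
          simp only [Finset.coe_filter, Set.mem_setOf_eq] at hv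
          exact ⟨hsub (Finset.mem_coe.mpr hv.1), hv.2⟩
        · intro u hu v hv huv
          rw [Finset.mem_filter] at hu hv
          obtain ⟨tu, rfl⟩ := (hPmem j u).mp hu.1
          obtain ⟨tv, rfl⟩ := (hPmem j v).mp hv.1
          have htne : tu ≠ tv := fun h => huv (by rw [h])
          rw [hknat]
          exact Hnonadj hs htne
      have hsplit : P j ⊆ (P j).filter (fun v => L v = i₀ - 1) ∪
          ((P j).filter (fun v => L v = i₀) ∪ (P j).filter (fun v => L v = i₀ + 1)) := by
        intro v hv
        rcases hlayer v with h | h | h <;>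
          simp [Finset.mem_union, Finset.mem_filter, hv, h]
      have hcard := Finset.card_le_card hsplit
      have hu1 := Finset.card_union_le ((P j).filter (fun v => L v = i₀ - 1))
        (((P j).filter (fun v => L v = i₀)) ∪ ((P j).filter (fun v => L v = i₀ + 1)))
      have hu2 := Finset.card_union_le ((P j).filter (fun v => L v = i₀))
        ((P j).filter (fun v => L v = i₀ + 1))
      have h1 := hfil (i₀ - 1)
      have h2 := hfil i₀
      have h3 := hfil (i₀ + 1)
      have := hPcard j
      omega
    rcases hbag with h | h
    · exact main 0 h
    · exact main 1 h

end Final
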